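/- Given positive real numbers x₁, …, x_t and a positive integer S with S ≤ x₁ + ⋯ + x_t, and any non-negative reals a₁, …, a_t, there exist non-negative integers y₁, …, y_t satisfying: (i) 0 ≤ y_i ≤ ⌈x_i⌉ for each i; (ii) ∑_{i=1}^t y_i = S; and (iii) ∑_{i=1}^t a_i y_i ≤ ∑_{i=1}^t a_i x_i. -/

import Mathlib

lemma stmt4_aux {ι : Type*} [DecidableEq ι] (s : Finset ι) :
    ∀ (x a : ι → ℝ), (∀ i ∈ s, 0 < x i) → (∀ i ∈ s, 0 ≤ a i) →
    ∀ (m : ℝ), 0 ≤ m → (∀ i ∈ s, m ≤ a i) →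
    ∀ (S : ℕ), 0 < S → (S : ℝ) ≤ ∑ i ∈ s, x i →
    ∃ y : ι → ℕ, (∀ i ∈ s, y i ≤ ⌈x i⌉₊) ∧ (∀ i ∉ s, y i = 0) ∧
      (∑ i ∈ s, y i) = S ∧
      (∑ i ∈ s, a i * (y i : ℝ)) ≤ (∑ i ∈ s, a i * x i) - m * ((∑ i ∈ s, x i) - S) := by
  induction s using Finset.strongInductionOn with
  | _ s ih =>
    intro x a hx ha m hm0 hma S hS hSle
    -- s is nonempty
    have hne : s.Nonempty := by
      rcases Finset.eq_empty_or_nonempty s with h | h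
      · exfalso
        rw [h] at hSle
        simp at hSle
        have : (0 : ℝ) < S := by exact_mod_cast hS
        linarith
      · exact h
    obtain ⟨j, hj, hja⟩ := s.exists_min_image a hne
    have hxj := hx j hj
    have hxjle : x j ≤ (⌈x j⌉₊ : ℝ) := Nat.le_ceil (x j)
    have hmaj : m ≤ a j := hma j hj
    have hslack : (S : ℝ) ≤ ∑ i ∈ s, x i := hSle
    by_cases hc : S ≤ ⌈x j⌉₊
    · -- put everything on j
      refine ⟨fun i => if i = j then S else 0, ?_, ?_, ?_, ?_⟩
      · intro i hi
        by_cases hij : i = j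
        · subst hij; simp [hc]
        · simp [hij]
      · intro i hi
        have : i ≠ j := fun h => hi (h ▸ hj)
        simp [this]
      · simp [Finset.sum_ite_eq' s j, hj]
      · have hsum : (∑ i ∈ s, a i * ((if i = j then S else 0 : ℕ) : ℝ)) = a j * S := by
          rw [Finset.sum_congr rfl (fun i _ => ?_)]
          · rw [Finset.sum_ite_eq' s j, if_pos hj]
          · by_cases hij : i = j
            · subst hij; simp
            · simp [hij]
        rw [hsum]
        have h1 : ∑ i ∈ s, a j * x i ≤ ∑ i ∈ s, a i * x i :=
          Finset.sum_le_sum (fun i hi =>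
            mul_le_mul_of_nonneg_right (hja i hi) (hx i hi).le)
        rw [← Finset.mul_sum] at h1
        nlinarith [hslack]
    · -- fill j to its ceiling, recurse on the rest
      push_neg at hc
      set c : ℕ := ⌈x j⌉₊ with hcdef
      have hcS : c < S := hc
      have hsplit : x j + ∑ i ∈ s.erase j, x i = ∑ i ∈ s, x i :=
        Finset.add_sum_erase s x hj
      have hS' : 0 < S - c := Nat.sub_pos_of_lt hcS
      have hcast : ((S - c : ℕ) : ℝ) = (S : ℝ) - (c : ℝ) := by
        rw [Nat.cast_sub hcS.le]
      have hSle' : ((S - c : ℕ) : ℝ) ≤ ∑ i ∈ s.erase j, x i := by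
        rw [hcast]; linarith
      obtain ⟨y', hy'1, hy'2, hy'3, hy'4⟩ :=
        ih (s.erase j) (Finset.erase_ssubset hj) x a
          (fun i hi => hx i (Finset.mem_of_mem_erase hi))
          (fun i hi => ha i (Finset.mem_of_mem_erase hi))
          (a j) (ha j hj)
          (fun i hi => hja i (Finset.mem_of_mem_erase hi))
          (S - c) hS' hSle'
      refine ⟨fun i => if i = j then c else y' i, ?_, ?_, ?_, ?_⟩
      · intro i hi
        by_cases hij : i = j
        · subst hij; simp [hcdef]
        · simp only [hij, if_neg, if_false]
          exact hy'1 i (Finset.mem_erase.mpr ⟨hij, hi⟩)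
      · intro i hi
        have hij : i ≠ j := fun h => hi (h ▸ hj)
        simp only [hij, if_false]
        exact hy'2 i (fun h => hi (Finset.mem_of_mem_erase h))
      · rw [← Finset.add_sum_erase s _ hj, if_pos rfl]
        have : ∑ i ∈ s.erase j, (if i = j then c else y' i) = ∑ i ∈ s.erase j, y' i :=
          Finset.sum_congr rfl (fun i hi => by
            rw [if_neg (Finset.ne_of_mem_erase hi)])
        rw [this, hy'3]
        omega
      · rw [← Finset.add_sum_erase s _ hj]
        beta_reduce
        rw [if_pos rfl]
        have heq : ∑ i ∈ s.erase j, a i * (((if i = j then c else y' i) : ℕ) : ℝ)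
            = ∑ i ∈ s.erase j, a i * (y' i : ℝ) :=
          Finset.sum_congr rfl (fun i hi => by
            rw [if_neg (Finset.ne_of_mem_erase hi)])
        rw [heq]
        rw [← Finset.add_sum_erase s (fun i => a i * x i) hj]
        rw [hcast] at hy'4
        nlinarith [hslack, hy'4, hxjle]

theorem stmt4 (t : ℕ) (x : Fin t → ℝ) (hx : ∀ i, 0 < x i)
    (S : ℕ) (hS : 0 < S) (hSle : (S : ℝ) ≤ ∑ i, x i)
    (a : Fin t → ℝ) (ha : ∀ i, 0 ≤ a i) :
    ∃ y : Fin t → ℕ, (∀ i, y i ≤ ⌈x i⌉₊) ∧ (∑ i, y i) = S ∧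
      (∑ i, a i * (y i : ℝ)) ≤ ∑ i, a i * x i := by
  obtain ⟨y, h1, _, h3, h4⟩ :=
    stmt4_aux (Finset.univ : Finset (Fin t)) x a
      (fun i _ => hx i) (fun i _ => ha i)
      0 le_rfl (fun i _ => ha i) S hS hSle
  refine ⟨y, fun i => h1 i (Finset.mem_univ i), h3, ?_⟩
  simpa using h4
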